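/- The second Robinson form R₂(x,y,z,w) = x²(x−w)² + y²(y−w)² + z²(z−w)² + 2xyz(x+y+z−2w) does not lie in the Minkowski sum Σ_{4,4} + C_{4,4} of the SOS cone and the SONC cone of quaternary quartics. -/

import Mathlib

open MvPolynomial

/-- Embed an exponent vector into `ℝⁿ`. -/
def expToVec {n : ℕ} (α : Fin n →₀ ℕ) : Fin n → ℝ := fun i => (α i : ℝ)

/-- `h` is a nonnegative circuit form of degree `d` in `n` variables: it is
homogeneous of degree `d`, nonnegative, its support consists of a set `S` of
affinely independent even exponent vectors with positive coefficients
(the outer terms), possibly together with one additional exponent `β` lying in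
the relative interior of the convex hull of `S` (the inner term). -/
def IsNonnegCircuit {n : ℕ} (d : ℕ) (h : MvPolynomial (Fin n) ℝ) : Prop :=
  h.IsHomogeneous d ∧ (∀ x : Fin n → ℝ, 0 ≤ eval x h) ∧
  ∃ S : Finset (Fin n →₀ ℕ),
    (∀ α ∈ S, (∀ i, Even (α i)) ∧ 0 < coeff α h) ∧
    AffineIndependent ℝ (fun a : {α : (Fin n →₀ ℕ) // α ∈ S} => expToVec a.1) ∧
    ((h.support : Set (Fin n →₀ ℕ)) = ↑S ∨
      ∃ β : Fin n →₀ ℕ, β ∉ S ∧ (h.support : Set (Fin n →₀ ℕ)) = insert β ↑S ∧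
        expToVec β ∈ intrinsicInterior ℝ (convexHull ℝ (expToVec '' ↑S)))

/-- `f` is a sum of squares of forms of degree `d` (hence a form of degree `2d`). -/
def IsSOSForm {n : ℕ} (d : ℕ) (f : MvPolynomial (Fin n) ℝ) : Prop :=
  ∃ (k : ℕ) (g : Fin k → MvPolynomial (Fin n) ℝ),
    (∀ i, (g i).IsHomogeneous d) ∧ f = ∑ i, (g i) ^ 2

/-- `f` is a sum of nonnegative circuit forms of degree `d` (SONC). -/
def IsSONC {n : ℕ} (d : ℕ) (f : MvPolynomial (Fin n) ℝ) : Prop :=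
  ∃ (k : ℕ) (h : Fin k → MvPolynomial (Fin n) ℝ),
    (∀ i, IsNonnegCircuit d (h i)) ∧ f = ∑ i, h i

/-- The second Robinson form `R₂(x,y,z,w)`. -/
noncomputable def Robinson2 : MvPolynomial (Fin 4) ℝ :=
  X 0 ^ 2 * (X 0 - X 3) ^ 2 + X 1 ^ 2 * (X 1 - X 3) ^ 2 + X 2 ^ 2 * (X 2 - X 3) ^ 2
    + 2 * X 0 * X 1 * X 2 * (X 0 + X 1 + X 2 - 2 * X 3)

noncomputable def Ex (a b c d : ℕ) : Fin 4 →₀ ℕ :=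
  Finsupp.single 0 a + Finsupp.single 1 b + Finsupp.single 2 c + Finsupp.single 3 d
@[simp] lemma Ex_apply0 (a b c d : ℕ) : Ex a b c d 0 = a := by simp [Ex, Finsupp.single_apply]
@[simp] lemma Ex_apply1 (a b c d : ℕ) : Ex a b c d 1 = b := by simp [Ex, Finsupp.single_apply]
@[simp] lemma Ex_apply2 (a b c d : ℕ) : Ex a b c d 2 = c := by simp [Ex, Finsupp.single_apply]
@[simp] lemma Ex_apply3 (a b c d : ℕ) : Ex a b c d 3 = d := by simp [Ex, Finsupp.single_apply]

lemma eq_Ex {α : Fin 4 →₀ ℕ} {a b c d : ℕ} (h0 : α 0 = a) (h1 : α 1 = b)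
    (h2 : α 2 = c) (h3 : α 3 = d) : α = Ex a b c d := by
  refine Finsupp.ext fun i => ?_
  fin_cases i <;> simpa using (by assumption)

lemma degree_eq_sum (d : Fin 4 →₀ ℕ) : d.degree = d 0 + d 1 + d 2 + d 3 := by
  rw [Finsupp.degree_apply, Finset.sum_subset (Finset.subset_univ d.support)
    (fun x _ hx => Finsupp.notMem_support_iff.mp hx), Fin.sum_univ_four]

lemma homog_deg_sum {n : ℕ} {q : MvPolynomial (Fin 4) ℝ} (hq : q.IsHomogeneous n)
    {d : Fin 4 →₀ ℕ} (hd : d ∈ q.support) : d 0 + d 1 + d 2 + d 3 = n := by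
  rw [← degree_eq_sum]
  by_contra h
  exact (mem_support_iff.mp hd) (hq.coeff_eq_zero h)

lemma eval_expand (p : Fin 4 → ℝ) (q : MvPolynomial (Fin 4) ℝ) :
    eval p q = ∑ d ∈ q.support, coeff d q * (p 0 ^ d 0 * p 1 ^ d 1 * p 2 ^ d 2 * p 3 ^ d 3) := by
  rw [eval_eq]
  refine Finset.sum_congr rfl fun d _ => ?_
  rw [Finset.prod_subset (Finset.subset_univ d.support)
    (fun x _ hx => by rw [Finsupp.notMem_support_iff.mp hx, pow_zero]), Fin.prod_univ_four]

lemma sum_ite_coeff (q : MvPolynomial (Fin 4) ℝ) (α : Fin 4 →₀ ℕ) :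
    (∑ d ∈ q.support, if d = α then coeff d q else 0) = coeff α q := by
  rw [Finset.sum_ite_eq' q.support α fun d => coeff d q]
  by_cases hm : α ∈ q.support
  · rw [if_pos hm]
  · rw [if_neg hm, notMem_support_iff.mp hm]

lemma coeff_0110 {q : MvPolynomial (Fin 4) ℝ} (hq : q.IsHomogeneous 2)
    (e1 : eval ![0,0,0,1] q = 0) (e3 : eval ![0,1,0,1] q = 0)
    (e4 : eval ![0,0,1,1] q = 0) (e6 : eval ![0,1,1,1] q = 0) :
    coeff (Ex 0 1 1 0) q = 0 := by
  have key : coeff (Ex 0 1 1 0) q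
      = eval ![0,1,1,1] q - eval ![0,1,0,1] q - eval ![0,0,1,1] q + eval ![0,0,0,1] q := by
    rw [eval_expand, eval_expand, eval_expand, eval_expand,
      ← Finset.sum_sub_distrib, ← Finset.sum_sub_distrib, ← Finset.sum_add_distrib,
      ← sum_ite_coeff q (Ex 0 1 1 0)]
    refine Finset.sum_congr rfl fun d hd => ?_
    have hdeg := homog_deg_sum hq hd
    simp only [Matrix.cons_val_zero, Matrix.cons_val_one, Matrix.head_cons,
      Matrix.cons_val_two, Matrix.cons_val_three, Matrix.tail_cons, one_pow]
    by_cases hE : d = Ex 0 1 1 0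
    · subst hE
      norm_num
    · rw [if_neg hE]
      by_cases h0 : d 0 = 0
      · by_cases h1 : d 1 = 0
        · rw [h0, h1]; norm_num
        · by_cases h2 : d 2 = 0
          · rw [h0, h2, zero_pow h1]; norm_num
          · exact absurd (eq_Ex h0 (by omega) (by omega) (by omega)) hE
      · rw [zero_pow h0]; ring
  rw [key, e1, e3, e4, e6]; ring

lemma coeff_1100 {q : MvPolynomial (Fin 4) ℝ} (hq : q.IsHomogeneous 2)
    (e1 : eval ![0,0,0,1] q = 0) (e2 : eval ![1,0,0,1] q = 0)
    (e3 : eval ![0,1,0,1] q = 0) (e5 : eval ![1,1,0,1] q = 0) :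
    coeff (Ex 1 1 0 0) q = 0 := by
  have key : coeff (Ex 1 1 0 0) q
      = eval ![1,1,0,1] q - eval ![1,0,0,1] q - eval ![0,1,0,1] q + eval ![0,0,0,1] q := by
    rw [eval_expand, eval_expand, eval_expand, eval_expand,
      ← Finset.sum_sub_distrib, ← Finset.sum_sub_distrib, ← Finset.sum_add_distrib,
      ← sum_ite_coeff q (Ex 1 1 0 0)]
    refine Finset.sum_congr rfl fun d hd => ?_
    have hdeg := homog_deg_sum hq hd
    simp only [Matrix.cons_val_zero, Matrix.cons_val_one, Matrix.head_cons,
      Matrix.cons_val_two, Matrix.cons_val_three, Matrix.tail_cons, one_pow]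
    by_cases hE : d = Ex 1 1 0 0
    · subst hE
      norm_num
    · rw [if_neg hE]
      by_cases h2 : d 2 = 0
      · by_cases h0 : d 0 = 0
        · rw [h0, h2]; norm_num
        · by_cases h1 : d 1 = 0
          · rw [h1, h2, zero_pow h0]; norm_num
          · exact absurd (eq_Ex (by omega) (by omega) h2 (by omega)) hE
      · rw [zero_pow h2]; ring
  rw [key, e1, e2, e3, e5]; ring

lemma coeff_sq_2110 {q : MvPolynomial (Fin 4) ℝ} (hq : q.IsHomogeneous 2)
    (hA : coeff (Ex 0 1 1 0) q = 0) (hB : coeff (Ex 1 1 0 0) q = 0) :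
    coeff (Ex 2 1 1 0) (q ^ 2) = 0 := by
  rw [sq, coeff_mul]
  refine Finset.sum_eq_zero fun x hx => ?_
  rw [Finset.HasAntidiagonal.mem_antidiagonal] at hx
  have h0 : x.1 0 + x.2 0 = 2 := by
    have := congrArg (fun f : Fin 4 →₀ ℕ => f 0) hx; simpa using this
  have h1 : x.1 1 + x.2 1 = 1 := by
    have := congrArg (fun f : Fin 4 →₀ ℕ => f 1) hx; simpa using this
  have h2 : x.1 2 + x.2 2 = 1 := by
    have := congrArg (fun f : Fin 4 →₀ ℕ => f 2) hx; simpa using this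
  have h3 : x.1 3 + x.2 3 = 0 := by
    have := congrArg (fun f : Fin 4 →₀ ℕ => f 3) hx; simpa using this
  by_cases hda : x.1 0 + x.1 1 + x.1 2 + x.1 3 = 2
  · by_cases hdb : x.2 0 + x.2 1 + x.2 2 + x.2 3 = 2
    · -- both degree 2
      by_cases ha1 : x.1 1 = 0
      · by_cases ha2 : x.1 2 = 0
        · -- x.1 = (2,0,0,0), x.2 = (0,1,1,0)
          have : x.2 = Ex 0 1 1 0 := eq_Ex (by omega) (by omega) (by omega) (by omega)
          rw [this, hA, mul_zero]
        · -- x.2 1 = 1, x.2 2 = 0 : x.2 = (1,1,0,0)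
          have : x.2 = Ex 1 1 0 0 := eq_Ex (by omega) (by omega) (by omega) (by omega)
          rw [this, hB, mul_zero]
      · by_cases ha2 : x.1 2 = 0
        · have : x.1 = Ex 1 1 0 0 := eq_Ex (by omega) (by omega) (by omega) (by omega)
          rw [this, hB, zero_mul]
        · have : x.1 = Ex 0 1 1 0 := eq_Ex (by omega) (by omega) (by omega) (by omega)
          rw [this, hA, zero_mul]
    · rw [hq.coeff_eq_zero (d := x.2) (by rw [degree_eq_sum]; exact hdb), mul_zero]
  · rw [hq.coeff_eq_zero (d := x.1) (by rw [degree_eq_sum]; exact hda), zero_mul]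

lemma circuit_coeff_2110 {h : MvPolynomial (Fin 4) ℝ} (hc : IsNonnegCircuit 4 h)
    (e5 : eval ![1,1,0,1] h = 0) (e7 : eval ![1,0,1,1] h = 0) (e6 : eval ![0,1,1,1] h = 0) :
    coeff (Ex 2 1 1 0) h = 0 := by
  obtain ⟨hhom, hnn, S, hSprop, haff, hcase⟩ := hc
  by_contra hne
  have hmem : Ex 2 1 1 0 ∈ h.support := mem_support_iff.mpr hne
  have hnotS : Ex 2 1 1 0 ∉ S := by
    intro hS
    have := (hSprop _ hS).1 1
    simp [Nat.even_iff] at this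
  rcases hcase with hsup | ⟨β, hβS, hsup, hint⟩
  · exact hnotS (by
      have : (Ex 2 1 1 0 : Fin 4 →₀ ℕ) ∈ (h.support : Set (Fin 4 →₀ ℕ)) := hmem
      rw [hsup] at this
      exact this)
  · have hβ : β = Ex 2 1 1 0 := by
      have hm : (Ex 2 1 1 0 : Fin 4 →₀ ℕ) ∈ (h.support : Set (Fin 4 →₀ ℕ)) := hmem
      rw [hsup] at hm
      rcases hm with hm | hm
      · exact hm.symm
      · exact absurd hm hnotS
    subst hβ
    -- key: every exponent in S evaluates to zero at u
    have aux : ∀ (u : Fin 4 → ℝ), eval u h = 0 → (∀ i, 0 ≤ u i) →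
        (u 0 ^ (2:ℕ) * u 1 * u 2 = 0) →
        ∀ α ∈ S, u 0 ^ α 0 * u 1 ^ α 1 * u 2 ^ α 2 * u 3 ^ α 3 = 0 := by
      intro u hu hunn hβ0 α hα
      have hαsup : α ∈ h.support := by
        have : (α : Fin 4 →₀ ℕ) ∈ (h.support : Set (Fin 4 →₀ ℕ)) := by
          rw [hsup]; exact Set.mem_insert_of_mem _ hα
        exact this
      rw [eval_expand] at hu
      have hterms : ∀ d ∈ h.support,
          0 ≤ coeff d h * (u 0 ^ d 0 * u 1 ^ d 1 * u 2 ^ d 2 * u 3 ^ d 3) := by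
        intro d hd
        have hd' : (d : Fin 4 →₀ ℕ) ∈ insert (Ex 2 1 1 0) (↑S : Set (Fin 4 →₀ ℕ)) := by
          rw [← hsup]; exact hd
        rcases hd' with rfl | hdS
        · have : u 0 ^ (Ex 2 1 1 0) 0 * u 1 ^ (Ex 2 1 1 0) 1 * u 2 ^ (Ex 2 1 1 0) 2
              * u 3 ^ (Ex 2 1 1 0) 3 = 0 := by
            simp only [Ex_apply0, Ex_apply1, Ex_apply2, Ex_apply3, pow_one, pow_zero, mul_one]
            exact hβ0
          rw [this, mul_zero]
        · refine mul_nonneg (le_of_lt (hSprop _ hdS).2) ?_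
          have h0 := hunn 0; have h1 := hunn 1; have h2 := hunn 2; have h3 := hunn 3
          positivity
      have hterm0 := (Finset.sum_eq_zero_iff_of_nonneg hterms).mp hu α hαsup
      rcases mul_eq_zero.mp hterm0 with hc0 | hc0
      · exact absurd hc0 (ne_of_gt (hSprop _ hα).2)
      · exact hc0
    have hSempty : S = ∅ := by
      rw [Finset.eq_empty_iff_forall_notMem]
      intro α hα
      have hαsup : α ∈ h.support := by
        have : (α : Fin 4 →₀ ℕ) ∈ (h.support : Set (Fin 4 →₀ ℕ)) := by
          rw [hsup]; exact Set.mem_insert_of_mem _ hα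
        exact this
      have hdeg : α 0 + α 1 + α 2 + α 3 = 4 := homog_deg_sum hhom hαsup
      have heven := (hSprop α hα).1
      have k5 := aux ![1,1,0,1] e5 (by intro i; fin_cases i <;> norm_num) (by norm_num [Matrix.cons_val_two]) α hα
      have k7 := aux ![1,0,1,1] e7 (by intro i; fin_cases i <;> norm_num) (by norm_num) α hα
      have k6 := aux ![0,1,1,1] e6 (by intro i; fin_cases i <;> norm_num) (by norm_num) α hα
      simp only [Matrix.cons_val_zero, Matrix.cons_val_one, Matrix.head_cons,
        Matrix.cons_val_two, Matrix.cons_val_three, Matrix.tail_cons, one_pow,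
        one_mul, mul_one] at k5 k7 k6
      have h2ne : α 2 ≠ 0 := by
        intro hz; rw [hz, pow_zero] at k5; norm_num at k5
      have h1ne : α 1 ≠ 0 := by
        intro hz; rw [hz, pow_zero] at k7; norm_num at k7
      have h0ne : α 0 ≠ 0 := by
        intro hz; rw [hz, pow_zero] at k6; norm_num at k6
      obtain ⟨r0, hr0⟩ := heven 0
      obtain ⟨r1, hr1⟩ := heven 1
      obtain ⟨r2, hr2⟩ := heven 2
      omega
    rw [hSempty] at hint
    simp only [Finset.coe_empty, Set.image_empty, convexHull_empty,
      intrinsicInterior_empty] at hint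
    exact hint


lemma monomial_Ex (a b c d : ℕ) (r : ℝ) :
    (monomial (Ex a b c d) r : MvPolynomial (Fin 4) ℝ)
      = C r * X 0 ^ a * X 1 ^ b * X 2 ^ c * X 3 ^ d := by
  simp [Ex, X_pow_eq_monomial, monomial_mul, C_mul_monomial, add_assoc]

lemma Robinson2_eq : Robinson2 =
    monomial (Ex 4 0 0 0) 1 + monomial (Ex 3 0 0 1) (-2) + monomial (Ex 2 0 0 2) 1
  + monomial (Ex 0 4 0 0) 1 + monomial (Ex 0 3 0 1) (-2) + monomial (Ex 0 2 0 2) 1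
  + monomial (Ex 0 0 4 0) 1 + monomial (Ex 0 0 3 1) (-2) + monomial (Ex 0 0 2 2) 1
  + monomial (Ex 2 1 1 0) 2 + monomial (Ex 1 2 1 0) 2 + monomial (Ex 1 1 2 0) 2
  + monomial (Ex 1 1 1 1) (-4) := by
  simp only [monomial_Ex, map_neg, map_one, map_ofNat]
  unfold Robinson2
  ring


@[simp] lemma Ex_inj {a b c d a' b' c' d' : ℕ} :
    Ex a b c d = Ex a' b' c' d' ↔ a = a' ∧ b = b' ∧ c = c' ∧ d = d' := by
  constructor
  · intro h
    exact ⟨by simpa using congrArg (fun f => f 0) h, by simpa using congrArg (fun f => f 1) h,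
      by simpa using congrArg (fun f => f 2) h, by simpa using congrArg (fun f => f 3) h⟩
  · rintro ⟨rfl, rfl, rfl, rfl⟩; rfl

lemma coeff_R2 : coeff (Ex 2 1 1 0) Robinson2 = 2 := by
  rw [Robinson2_eq]
  simp [coeff_add, coeff_monomial]

/-- The second Robinson form is not in `Σ_{4,4} + C_{4,4}`. -/
theorem robinson2_not_sos_plus_sonc :
    ¬ ∃ g c : MvPolynomial (Fin 4) ℝ, IsSOSForm 2 g ∧ IsSONC 4 c ∧ Robinson2 = g + c := by
  rintro ⟨g, c, ⟨k, q, hqhom, rfl⟩, ⟨m, hh, hcirc, rfl⟩, hR⟩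
  have zeroq : ∀ p : Fin 4 → ℝ, eval p Robinson2 = 0 →
      (∀ i, eval p (q i) = 0) ∧ (∀ j, eval p (hh j) = 0) := by
    intro p hp
    have hg : eval p (∑ i, q i ^ 2) = ∑ i, (eval p (q i)) ^ 2 := by simp
    have hc : eval p (∑ j, hh j) = ∑ j, eval p (hh j) := by simp
    have hsum : eval p (∑ i, q i ^ 2) + eval p (∑ j, hh j) = 0 := by
      rw [← map_add, ← hR, hp]
    have hgnn : 0 ≤ ∑ i, (eval p (q i)) ^ 2 := Finset.sum_nonneg fun i _ => sq_nonneg _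
    have hcnn0 : ∀ j ∈ Finset.univ, (0:ℝ) ≤ eval p (hh j) := fun j _ => (hcirc j).2.1 p
    have hcnn : 0 ≤ ∑ j, eval p (hh j) := Finset.sum_nonneg hcnn0
    rw [hg, hc] at hsum
    have hg0 : ∑ i, (eval p (q i)) ^ 2 = 0 := by linarith
    have hc0 : ∑ j, eval p (hh j) = 0 := by linarith
    constructor
    · intro i
      have := (Finset.sum_eq_zero_iff_of_nonneg
        (fun i _ => sq_nonneg (eval p (q i)))).mp hg0 i (Finset.mem_univ i)
      exact sq_eq_zero_iff.mp this
    · intro j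
      exact (Finset.sum_eq_zero_iff_of_nonneg hcnn0).mp hc0 j (Finset.mem_univ j)
  have z1 : eval ![0,0,0,1] Robinson2 = 0 := by
    simp only [Robinson2, map_add, map_mul, map_sub, map_pow, map_ofNat, eval_X]; norm_num [Matrix.cons_val_two, Matrix.cons_val_three]
  have z2 : eval ![1,0,0,1] Robinson2 = 0 := by
    simp only [Robinson2, map_add, map_mul, map_sub, map_pow, map_ofNat, eval_X]; norm_num [Matrix.cons_val_two, Matrix.cons_val_three]
  have z3 : eval ![0,1,0,1] Robinson2 = 0 := by
    simp only [Robinson2, map_add, map_mul, map_sub, map_pow, map_ofNat, eval_X]; norm_num [Matrix.cons_val_two, Matrix.cons_val_three]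
  have z4 : eval ![0,0,1,1] Robinson2 = 0 := by
    simp only [Robinson2, map_add, map_mul, map_sub, map_pow, map_ofNat, eval_X]; norm_num [Matrix.cons_val_two, Matrix.cons_val_three]
  have z5 : eval ![1,1,0,1] Robinson2 = 0 := by
    simp only [Robinson2, map_add, map_mul, map_sub, map_pow, map_ofNat, eval_X]; norm_num [Matrix.cons_val_two, Matrix.cons_val_three]
  have z6 : eval ![0,1,1,1] Robinson2 = 0 := by
    simp only [Robinson2, map_add, map_mul, map_sub, map_pow, map_ofNat, eval_X]; norm_num [Matrix.cons_val_two, Matrix.cons_val_three]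
  have z7 : eval ![1,0,1,1] Robinson2 = 0 := by
    simp only [Robinson2, map_add, map_mul, map_sub, map_pow, map_ofNat, eval_X]; norm_num [Matrix.cons_val_two, Matrix.cons_val_three]
  have hco : coeff (Ex 2 1 1 0) Robinson2 = 0 := by
    rw [hR, coeff_add]
    have hgc : coeff (Ex 2 1 1 0) (∑ i, q i ^ 2) = 0 := by
      rw [coeff_sum]
      refine Finset.sum_eq_zero fun i _ => coeff_sq_2110 (hqhom i)
        (coeff_0110 (hqhom i) ((zeroq _ z1).1 i) ((zeroq _ z3).1 i)
          ((zeroq _ z4).1 i) ((zeroq _ z6).1 i))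
        (coeff_1100 (hqhom i) ((zeroq _ z1).1 i) ((zeroq _ z2).1 i)
          ((zeroq _ z3).1 i) ((zeroq _ z5).1 i))
    have hcc : coeff (Ex 2 1 1 0) (∑ j, hh j) = 0 := by
      rw [coeff_sum]
      exact Finset.sum_eq_zero fun j _ => circuit_coeff_2110 (hcirc j)
        ((zeroq _ z5).2 j) ((zeroq _ z7).2 j) ((zeroq _ z6).2 j)
    rw [hgc, hcc, add_zero]
  rw [coeff_R2] at hco
  norm_num at hco
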